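/- Let n ≥ 2 be an integer, R > 0, and let φ : [R,∞) → ℝ be a solution of φ'(r) = (1+φ(r)²)(1 − (n−1)φ(r)/r). Then r·(φ(r) − r/(n−1)) → −1 as r → ∞. -/

import Mathlib

noncomputable section
open Set Filter

/-- Barrier lemma: strict fencing from above on `[a, ∞)`. -/
lemma barrier_le {f f' B B' : ℝ → ℝ} {a : ℝ}
    (hf : ∀ x ∈ Ici a, HasDerivWithinAt f (f' x) (Ici a) x)
    (hB : ∀ x ∈ Ici a, HasDerivWithinAt B (B' x) (Ici a) x)
    (ha : f a ≤ B a)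
    (bound : ∀ x ∈ Ici a, f x = B x → f' x < B' x) :
    ∀ x ∈ Ici a, f x ≤ B x := by
  intro x hx
  have key : ∀ ⦃y⦄, y ∈ Icc a x → f y ≤ B y :=
    image_le_of_deriv_right_lt_deriv_boundary'
      (fun y hy => ((hf y hy.1).continuousWithinAt).mono Icc_subset_Ici_self)
      (fun y hy => (hf y hy.1).mono (Ici_subset_Ici.2 hy.1)) ha
      (fun y hy => ((hB y hy.1).continuousWithinAt).mono Icc_subset_Ici_self)
      (fun y hy => (hB y hy.1).mono (Ici_subset_Ici.2 hy.1))
      (fun y hy hfB => bound y hy.1 hfB)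
  exact key ⟨hx, le_rfl⟩

/-- Barrier lemma: nonstrict fencing from above on `[a, ∞)`. -/
lemma barrier_le' {f f' B B' : ℝ → ℝ} {a : ℝ}
    (hf : ∀ x ∈ Ici a, HasDerivWithinAt f (f' x) (Ici a) x)
    (hB : ∀ x ∈ Ici a, HasDerivWithinAt B (B' x) (Ici a) x)
    (ha : f a ≤ B a)
    (bound : ∀ x ∈ Ici a, f' x ≤ B' x) :
    ∀ x ∈ Ici a, f x ≤ B x := by
  intro x hx
  have key : ∀ ⦃y⦄, y ∈ Icc a x → f y ≤ B y :=
    image_le_of_deriv_right_le_deriv_boundary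
      (fun y hy => ((hf y hy.1).continuousWithinAt).mono Icc_subset_Ici_self)
      (fun y hy => (hf y hy.1).mono (Ici_subset_Ici.2 hy.1)) ha
      (fun y hy => ((hB y hy.1).continuousWithinAt).mono Icc_subset_Ici_self)
      (fun y hy => (hB y hy.1).mono (Ici_subset_Ici.2 hy.1))
      (fun y hy => bound y hy.1)
  exact key ⟨hx, le_rfl⟩

lemma barrier_ge {f f' B B' : ℝ → ℝ} {a : ℝ}
    (hf : ∀ x ∈ Ici a, HasDerivWithinAt f (f' x) (Ici a) x)
    (hB : ∀ x ∈ Ici a, HasDerivWithinAt B (B' x) (Ici a) x)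
    (ha : B a ≤ f a)
    (bound : ∀ x ∈ Ici a, f x = B x → B' x < f' x) :
    ∀ x ∈ Ici a, B x ≤ f x := by
  intro x hx
  have := barrier_le (f := fun y => -f y) (f' := fun y => -f' y)
    (B := fun y => -B y) (B' := fun y => -B' y)
    (fun y hy => (hf y hy).neg) (fun y hy => (hB y hy).neg)
    (neg_le_neg ha)
    (fun y hy h => neg_lt_neg (bound y hy (by linarith [neg_injective h])))
    x hx
  simp only [neg_le_neg_iff] at this
  exact this

lemma barrier_ge' {f f' B B' : ℝ → ℝ} {a : ℝ}
    (hf : ∀ x ∈ Ici a, HasDerivWithinAt f (f' x) (Ici a) x)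
    (hB : ∀ x ∈ Ici a, HasDerivWithinAt B (B' x) (Ici a) x)
    (ha : B a ≤ f a)
    (bound : ∀ x ∈ Ici a, B' x ≤ f' x) :
    ∀ x ∈ Ici a, B x ≤ f x := by
  intro x hx
  have := barrier_le' (f := fun y => -f y) (f' := fun y => -f' y)
    (B := fun y => -B y) (B' := fun y => -B' y)
    (fun y hy => (hf y hy).neg) (fun y hy => (hB y hy).neg)
    (neg_le_neg ha) (fun y hy => neg_le_neg (bound y hy)) x hx
  simp only [neg_le_neg_iff] at this
  exact this

/-- Linear lower growth. -/
lemma linear_growth {f f' : ℝ → ℝ} {a c : ℝ}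
    (hf : ∀ x ∈ Ici a, HasDerivWithinAt f (f' x) (Ici a) x)
    (hc : ∀ x ∈ Ici a, c ≤ f' x) :
    ∀ x ∈ Ici a, f a + c * (x - a) ≤ f x := by
  have hB : ∀ x ∈ Ici a, HasDerivWithinAt (fun y => f a + c * (y - a)) c (Ici a) x := by
    intro x _
    simpa using ((((hasDerivWithinAt_id x (Ici a)).sub_const a).const_mul c).const_add (f a))
  exact barrier_ge' hf hB (by simp) (fun x hx => hc x hx)

/-- Linear upper decay. -/
lemma linear_decay {f f' : ℝ → ℝ} {a c : ℝ}
    (hf : ∀ x ∈ Ici a, HasDerivWithinAt f (f' x) (Ici a) x)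
    (hc : ∀ x ∈ Ici a, f' x ≤ c) :
    ∀ x ∈ Ici a, f x ≤ f a + c * (x - a) := by
  have hB : ∀ x ∈ Ici a, HasDerivWithinAt (fun y => f a + c * (y - a)) c (Ici a) x := by
    intro x _
    simpa using ((((hasDerivWithinAt_id x (Ici a)).sub_const a).const_mul c).const_add (f a))
  exact barrier_le' hf hB (by simp) (fun x hx => hc x hx)

section Main
variable {m R : ℝ} {φ : ℝ → ℝ}

/-- driving term of the ODE -/
def Fd (m : ℝ) (φ : ℝ → ℝ) : ℝ → ℝ := fun r => (1 + φ r ^ 2) * (1 - m * φ r / r)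

lemma hdφ (hφ : ∀ x ∈ Ici R, HasDerivWithinAt φ (Fd m φ x) (Ici R) x)
    {a : ℝ} (ha : R ≤ a) : ∀ x ∈ Ici a, HasDerivWithinAt φ (Fd m φ x) (Ici a) x :=
  fun x hx => (hφ x (ha.trans hx)).mono (Ici_subset_Ici.2 ha)

lemma hdθ (hφ : ∀ x ∈ Ici R, HasDerivWithinAt φ (Fd m φ x) (Ici R) x)
    {a : ℝ} (ha : R ≤ a) :
    ∀ x ∈ Ici a, HasDerivWithinAt (fun r => Real.arctan (φ r))
      (1 - m * φ x / x) (Ici a) x := by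
  intro x hx
  have h1 := (Real.hasDerivAt_arctan (φ x)).comp_hasDerivWithinAt x (hdφ hφ ha x hx)
  have hne : (1 + φ x ^ 2) ≠ 0 := by positivity
  have h2 : 1 / (1 + φ x ^ 2) * Fd m φ x = 1 - m * φ x / x := by
    simp only [Fd]; field_simp
  rw [h2] at h1
  exact h1

lemma stage1 (hm : 1 ≤ m) (hR : 0 < R)
    (hφ : ∀ x ∈ Ici R, HasDerivWithinAt φ (Fd m φ x) (Ici R) x) :
    ∃ r3, R ≤ r3 ∧ ∀ r, r3 ≤ r → r / (2 * m) ≤ φ r := by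
  have hm0 : 0 < m := lt_of_lt_of_le one_pos hm
  -- Step 1: reach
  have reach : ∃ a, R ≤ a ∧ a / (2 * m) < φ a := by
    by_contra h
    push_neg at h
    have hbound : ∀ x ∈ Ici R, (1 / 2 : ℝ) ≤ 1 - m * φ x / x := by
      intro x hx
      have hx0 : 0 < x := lt_of_lt_of_le hR hx
      have h1 : φ x ≤ x / (2 * m) := h x hx
      have h2 : m * φ x / x ≤ 1 / 2 := by
        rw [div_le_iff₀ hx0]
        calc m * φ x ≤ m * (x / (2 * m)) := by
              exact mul_le_mul_of_nonneg_left h1 hm0.le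
          _ = 1 / 2 * x := by field_simp
      linarith
    have grow := linear_growth (hdθ hφ le_rfl) hbound
    have hend := grow (R + 2 * Real.pi + 2) (by have := Real.pi_pos; simp only [mem_Ici]; linarith)
    have h1 := Real.arctan_lt_pi_div_two (φ (R + 2 * Real.pi + 2))
    have h2 := Real.neg_pi_div_two_lt_arctan (φ R)
    linarith
  -- Step 2: persistence
  obtain ⟨a1, ha1R, ha1⟩ := reach
  refine ⟨a1, ha1R, ?_⟩
  intro r hr
  refine barrier_ge (B := fun y => y / (2 * m)) (B' := fun _ => 1 / (2 * m))
    (hdφ hφ ha1R) (fun x _ => (hasDerivWithinAt_id x _).div_const (2 * m))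
    ha1.le ?_ r hr
  intro x hx hcontact
  have hx0 : 0 < x := lt_of_lt_of_le (lt_of_lt_of_le hR ha1R) hx
  have hφx : φ x = x / (2 * m) := hcontact
  have hφpos : 0 < φ x := by rw [hφx]; positivity
  have hFθ : 1 - m * φ x / x = 1 / 2 := by
    rw [hφx]; field_simp; ring
  have : Fd m φ x = (1 + φ x ^ 2) * (1 / 2) := by rw [Fd, hFθ]
  rw [this]
  have : 1 / (2 * m) ≤ 1 / 2 := by
    apply div_le_div_of_nonneg_left <;> linarith
  nlinarith [sq_nonneg (φ x), hφpos]

lemma hdψ (hφ : ∀ x ∈ Ici R, HasDerivWithinAt φ (Fd m φ x) (Ici R) x)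
    {a : ℝ} (ha : R ≤ a) :
    ∀ x ∈ Ici a, HasDerivWithinAt (fun r => φ r - r / m)
      (Fd m φ x - 1 / m) (Ici a) x :=
  fun x hx => (hdφ hφ ha x hx).sub ((hasDerivWithinAt_id x _).div_const m)

lemma stage2 (hm : 1 ≤ m) (hR : 0 < R)
    (hφ : ∀ x ∈ Ici R, HasDerivWithinAt φ (Fd m φ x) (Ici R) x) :
    ∃ r4, R ≤ r4 ∧ ∀ r, r4 ≤ r → φ r - r / m ≤ 0 := by
  have hm0 : 0 < m := lt_of_lt_of_le one_pos hm
  have reach : ∃ a, R ≤ a ∧ φ a - a / m ≤ 0 := by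
    by_contra h
    push_neg at h
    have hbound : ∀ x ∈ Ici R, Fd m φ x - 1 / m ≤ -(1 / m) := by
      intro x hx
      have hx0 : 0 < x := lt_of_lt_of_le hR hx
      have h1 : x < m * φ x := by
        have := h x hx
        have : x / m < φ x := by linarith
        calc x = m * (x / m) := by field_simp
          _ < m * φ x := by exact mul_lt_mul_of_pos_left this hm0
      have h2 : 1 - m * φ x / x ≤ 0 := by
        rw [sub_nonpos, le_div_iff₀ hx0]; linarith
      have h3 : Fd m φ x ≤ 0 :=
        mul_nonpos_of_nonneg_of_nonpos (by positivity) h2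
      linarith
    have decay := linear_decay (hdψ hφ le_rfl) hbound
    have h0 := h R le_rfl
    have ht : 0 < m * (φ R - R / m + 1) := mul_pos hm0 (by linarith)
    have hx0R : R ≤ R + m * (φ R - R / m + 1) := by linarith
    have hend := decay _ hx0R
    have hkey : -(1 / m) * (R + m * (φ R - R / m + 1) - R) = -(φ R - R / m + 1) := by
      field_simp; ring
    rw [hkey] at hend
    have := h _ hx0R
    linarith
  obtain ⟨a4, ha4R, ha4⟩ := reach
  refine ⟨a4, ha4R, ?_⟩
  intro r hr
  refine barrier_le (B := fun _ => (0 : ℝ)) (B' := fun _ => (0 : ℝ))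
    (hdψ hφ ha4R) (fun x _ => hasDerivWithinAt_const x _ 0) ha4 ?_ r hr
  intro x hx hcontact
  have hx0 : 0 < x := lt_of_lt_of_le (lt_of_lt_of_le hR ha4R) hx
  have hφx : φ x = x / m := by linarith [hcontact]
  have : Fd m φ x = 0 := by
    rw [Fd, hφx]
    have : 1 - m * (x / m) / x = 0 := by field_simp; ring
    rw [this, mul_zero]
  rw [this]
  simp only [zero_sub, neg_lt, neg_zero]
  positivity

lemma stage3 (hm : 1 ≤ m) (hR : 0 < R)
    (hφ : ∀ x ∈ Ici R, HasDerivWithinAt φ (Fd m φ x) (Ici R) x) :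
    ∃ r5, R ≤ r5 ∧ 1 ≤ r5 ∧ ∀ r, r5 ≤ r →
      (-8 ≤ r * (φ r - r / m) ∧ r * (φ r - r / m) ≤ 0) := by
  have hm0 : 0 < m := lt_of_lt_of_le one_pos hm
  obtain ⟨r3, hr3R, hr3⟩ := stage1 hm hR hφ
  obtain ⟨r4, hr4R, hr4⟩ := stage2 hm hR hφ
  set a2 := max (max r3 r4) (4 * m + 4) with ha2def
  have ha2R : R ≤ a2 := le_trans hr3R (le_trans (le_max_left r3 r4) (le_max_left _ _))
  have ha2m : 4 * m + 4 ≤ a2 := le_max_right _ _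
  have ha2r3 : r3 ≤ a2 := le_trans (le_max_left r3 r4) (le_max_left _ _)
  have ha2r4 : r4 ≤ a2 := le_trans (le_max_right r3 r4) (le_max_left _ _)
  -- key derivative lower bound in the bad region
  have hFψ_lower : ∀ x, a2 ≤ x → φ x - x / m ≤ -8 / x → 1 / m ≤ Fd m φ x - 1 / m := by
    intro x hx hψx
    have hx0 : 0 < x := by linarith
    have hφx : x / (2 * m) ≤ φ x := hr3 x (le_trans ha2r3 hx)
    have hkey : 1 - m * φ x / x = -(m * (φ x - x / m)) / x := by
      field_simp; ring
    have hgoal : 2 / m ≤ Fd m φ x := by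
      rw [Fd, hkey, ← mul_div_assoc]
      rw [div_le_div_iff₀ hm0 hx0]
      have hneg : (-8:ℝ) / x = -(8 / x) := by ring
      rw [hneg] at hψx
      have hv0 : 0 < -(φ x - x / m) := by
        have h8x : (0:ℝ) < 8 / x := by positivity
        linarith
      have h8 : 8 ≤ -(φ x - x / m) * x := by
        rw [← div_le_iff₀ hx0]; linarith
      have hsq : x ^ 2 ≤ 4 * m ^ 2 * φ x ^ 2 := by
        have h1 : 0 ≤ x / (2 * m) := by positivity
        have h2 := mul_le_mul hφx hφx h1 (le_trans h1 hφx)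
        have heq : x / (2 * m) * (x / (2 * m)) = x ^ 2 / (4 * m ^ 2) := by
          field_simp; ring
        rw [heq, div_le_iff₀ (by positivity : (0:ℝ) < 4 * m ^ 2)] at h2
        rw [pow_two (φ x)]
        linarith
      nlinarith [mul_le_mul_of_nonneg_left hsq hv0.le,
        mul_le_mul_of_nonneg_left h8 hx0.le,
        mul_nonneg (mul_nonneg hv0.le hm0.le) hm0.le]
    have h2m : (2:ℝ) / m = 1 / m + 1 / m := by ring
    linarith
  have reach : ∃ a, a2 ≤ a ∧ -8 / a ≤ φ a - a / m := by
    by_contra h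
    push_neg at h
    have grow := linear_growth (hdψ hφ ha2R)
      (fun x hx => hFψ_lower x hx (le_of_lt (h x hx)))
    have h0 := h a2 le_rfl
    have ha2pos : 0 < a2 := lt_of_lt_of_le hR ha2R
    have h8a2 : -8 / a2 < 0 := div_neg_of_neg_of_pos (by norm_num) ha2pos
    have ht : 0 < m * (-(φ a2 - a2 / m) + 1) := mul_pos hm0 (by linarith)
    have hx0R : a2 ≤ a2 + m * (-(φ a2 - a2 / m) + 1) := by linarith
    have hend := grow _ hx0R
    have hkey : 1 / m * (a2 + m * (-(φ a2 - a2 / m) + 1) - a2)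
        = -(φ a2 - a2 / m) + 1 := by field_simp; ring
    rw [hkey] at hend
    have hlast := h _ hx0R
    have hx0pos : (0:ℝ) < a2 + m * (-(φ a2 - a2 / m) + 1) := by linarith
    have : -8 / (a2 + m * (-(φ a2 - a2 / m) + 1)) < 0 :=
      div_neg_of_neg_of_pos (by norm_num) hx0pos
    linarith
  obtain ⟨a3, ha3a2, ha3⟩ := reach
  have ha3R : R ≤ a3 := le_trans ha2R ha3a2
  -- persistence of the lower bound -8/r
  have hpers : ∀ r, a3 ≤ r → -8 * r⁻¹ ≤ φ r - r / m := by
    refine barrier_ge (B := fun y => -8 * y⁻¹) (B' := fun y => -8 * -(y ^ 2)⁻¹)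
      (hdψ hφ ha3R) ?_ ?_ ?_
    · intro x hx
      have hx0 : x ≠ 0 := by
        have : 0 < x := lt_of_lt_of_le (lt_of_lt_of_le hR ha3R) hx
        exact this.ne'
      exact ((hasDerivAt_inv hx0).const_mul (-8 : ℝ)).hasDerivWithinAt
    · show (-8:ℝ) * a3⁻¹ ≤ φ a3 - a3 / m
      rw [show (-8:ℝ) * a3⁻¹ = -8 / a3 by rw [div_eq_mul_inv]]
      exact ha3
    · intro x hx hcontact
      have hcontact' : φ x - x / m = -8 * x⁻¹ := hcontact
      show (-8:ℝ) * -(x ^ 2)⁻¹ < Fd m φ x - 1 / m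
      have hxa2 : a2 ≤ x := le_trans ha3a2 hx
      have hx0 : 0 < x := by
        have : 0 < a2 := lt_of_lt_of_le hR ha2R
        linarith
      have hψx : φ x - x / m ≤ -8 / x := by
        rw [hcontact', div_eq_mul_inv]
      have hF := hFψ_lower x hxa2 hψx
      have hBval : (-8:ℝ) * -(x ^ 2)⁻¹ = 8 / x ^ 2 := by
        rw [div_eq_mul_inv]; ring
      rw [hBval]
      have : 8 / x ^ 2 < 1 / m := by
        rw [div_lt_div_iff₀ (by positivity) hm0]
        nlinarith
      linarith
  refine ⟨max a3 1, le_trans ha3R (le_max_left _ _), le_max_right _ _, ?_⟩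
  intro r hr
  have hra3 : a3 ≤ r := le_trans (le_max_left _ _) hr
  have hr0 : 0 < r := lt_of_lt_of_le (lt_of_lt_of_le hR ha3R) hra3
  constructor
  · have h1 := hpers r hra3
    have h2 := mul_le_mul_of_nonneg_left h1 hr0.le
    have h3 : r * (-8 * r⁻¹) = -8 := by field_simp
    linarith
  · have h1 := hr4 r (le_trans ha2r4 (le_trans ha3a2 hra3))
    exact mul_nonpos_of_nonneg_of_nonpos hr0.le h1

lemma hdu (hφ : ∀ x ∈ Ici R, HasDerivWithinAt φ (Fd m φ x) (Ici R) x)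
    {a : ℝ} (ha : R ≤ a) :
    ∀ x ∈ Ici a, HasDerivWithinAt (fun r => r * (φ r - r / m))
      ((φ x - x / m) + x * (Fd m φ x - 1 / m)) (Ici a) x := by
  intro x hx
  have := (hasDerivWithinAt_id x (Ici a)).mul (hdψ hφ ha x hx)
  simpa [Pi.mul_def] using this

set_option maxHeartbeats 1000000 in
lemma stage4 (hm : 1 ≤ m) (hR : 0 < R)
    (hφ : ∀ x ∈ Ici R, HasDerivWithinAt φ (Fd m φ x) (Ici R) x) :
    Tendsto (fun r => r * (φ r - r / m)) atTop (nhds (-1)) := by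
  have hm0 : 0 < m := lt_of_lt_of_le one_pos hm
  obtain ⟨r5, hr5R, hr51, hr5⟩ := stage3 hm hR hφ
  -- cleared-denominator identity
  have hId : ∀ x : ℝ, 0 < x →
      m * x ^ 3 * ((φ x - x / m) + x * (Fd m φ x - 1 / m)) =
        -x ^ 4 * (x * (φ x - x / m) + 1)
        + m * (1 - m) * (x * (φ x - x / m)) * x ^ 2
        - 2 * m * (x * (φ x - x / m)) ^ 2 * x ^ 2
        - m ^ 2 * (x * (φ x - x / m)) ^ 3 := by
    intro x hx
    rw [Fd]
    field_simp
    ring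
  -- estimate A : in the region u ≥ -1+ε the derivative is ≤ -1
  have estA : ∀ ε : ℝ, 0 < ε → ε ≤ 1 → ∀ x, r5 ≤ x → m * (1000 * m + 2) / ε ≤ x →
      -1 + ε ≤ x * (φ x - x / m) →
      (φ x - x / m) + x * (Fd m φ x - 1 / m) ≤ -1 := by
    intro ε hε hε1 x hx hεx hvx
    have hx1 : (1:ℝ) ≤ x := le_trans hr51 hx
    have hx0 : (0:ℝ) < x := by linarith
    obtain ⟨hv8, hv0⟩ := hr5 x hx
    set v := x * (φ x - x / m) with hvdef
    have hεx' : m * (1000 * m + 2) ≤ ε * x := by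
      rw [div_le_iff₀ hε] at hεx; linarith [hεx]
    have key : m * x ^ 3 * ((φ x - x / m) + x * (Fd m φ x - 1 / m)) ≤ m * x ^ 3 * (-1) := by
      rw [hId x hx0, ← hvdef]
      have h1 : x ^ 3 * (m * (1000 * m + 2)) ≤ x ^ 3 * (ε * x) :=
        mul_le_mul_of_nonneg_left hεx' (by positivity)
      have h2 : x ^ 3 * (ε * x) ≤ x ^ 4 * (v + 1) := by
        nlinarith [mul_nonneg (show (0:ℝ) ≤ x ^ 4 by positivity)
          (show (0:ℝ) ≤ v + 1 - ε by linarith)]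
      have h3 : x ^ 2 ≤ x ^ 3 := by nlinarith
      have h4 : (1 - m) * v ≤ 8 * (m - 1) := by
        nlinarith [mul_le_mul_of_nonneg_left (show -v ≤ 8 by linarith)
          (show (0:ℝ) ≤ m - 1 by linarith)]
      have h5 : -v ^ 3 ≤ 512 := by nlinarith [sq_nonneg v, sq_nonneg (v + 8)]
      have T2 : m * (1 - m) * v * x ^ 2 ≤ 8 * m ^ 2 * x ^ 3 := by
        have := mul_le_mul_of_nonneg_right h4
          (show (0:ℝ) ≤ m * x ^ 2 by positivity)
        nlinarith [mul_le_mul_of_nonneg_left h3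
          (show (0:ℝ) ≤ 8 * m ^ 2 by positivity), hm0]
      have T3 : -(2 * m * v ^ 2 * x ^ 2) ≤ 0 := by
        have : (0:ℝ) ≤ 2 * m * v ^ 2 * x ^ 2 := by positivity
        linarith
      have T4 : -(m ^ 2 * v ^ 3) ≤ 512 * m ^ 2 * x ^ 3 := by
        have h6 := mul_le_mul_of_nonneg_left h5 (show (0:ℝ) ≤ m ^ 2 by positivity)
        nlinarith [mul_le_mul_of_nonneg_left (show (1:ℝ) ≤ x ^ 3 by nlinarith)
          (show (0:ℝ) ≤ 512 * m ^ 2 by positivity)]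
      linarith [h1, h2, T2, T3, T4,
        mul_nonneg (mul_nonneg hm0.le hm0.le) (show (0:ℝ) ≤ x ^ 3 by positivity),
        mul_nonneg hm0.le (show (0:ℝ) ≤ x ^ 3 by positivity)]
    exact le_of_mul_le_mul_left (by linarith [key]) (show (0:ℝ) < m * x ^ 3 by positivity)
  -- estimate B : in the region u ≤ -1-ε the derivative is ≥ 1
  have estB : ∀ ε : ℝ, 0 < ε → ε ≤ 1 → ∀ x, r5 ≤ x → m * (1000 * m + 2) / ε ≤ x →
      x * (φ x - x / m) ≤ -1 - ε →
      1 ≤ (φ x - x / m) + x * (Fd m φ x - 1 / m) := by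
    intro ε hε hε1 x hx hεx hvx
    have hx1 : (1:ℝ) ≤ x := le_trans hr51 hx
    have hx0 : (0:ℝ) < x := by linarith
    obtain ⟨hv8, hv0⟩ := hr5 x hx
    set v := x * (φ x - x / m) with hvdef
    have hεx' : m * (1000 * m + 2) ≤ ε * x := by
      rw [div_le_iff₀ hε] at hεx; linarith [hεx]
    have key : m * x ^ 3 * (1:ℝ) ≤ m * x ^ 3 * ((φ x - x / m) + x * (Fd m φ x - 1 / m)) := by
      rw [hId x hx0, ← hvdef]
      have h1 : x ^ 3 * (m * (1000 * m + 2)) ≤ x ^ 3 * (ε * x) :=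
        mul_le_mul_of_nonneg_left hεx' (by positivity)
      have h2 : x ^ 3 * (ε * x) ≤ x ^ 4 * (-(v + 1)) := by
        nlinarith [mul_nonneg (show (0:ℝ) ≤ x ^ 4 by positivity)
          (show (0:ℝ) ≤ -(v + 1) - ε by linarith)]
      have h3 : x ^ 2 ≤ x ^ 3 := by nlinarith
      have T2 : (0:ℝ) ≤ m * (1 - m) * v * x ^ 2 := by
        have hv : (0:ℝ) ≤ (1 - m) * v := by
          nlinarith [mul_nonneg (show (0:ℝ) ≤ m - 1 by linarith)
            (show (0:ℝ) ≤ -v by linarith)]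
        nlinarith [mul_le_mul_of_nonneg_right hv
          (show (0:ℝ) ≤ m * x ^ 2 by positivity)]
      have T3 : -(128 * m ^ 2 * x ^ 3) ≤ -(2 * m * v ^ 2 * x ^ 2) := by
        have hv2 : v ^ 2 ≤ 64 := by nlinarith
        nlinarith [mul_le_mul_of_nonneg_left h3
            (show (0:ℝ) ≤ 128 * m by positivity),
          mul_le_mul_of_nonneg_left hv2 (show (0:ℝ) ≤ 2 * m * x ^ 2 by positivity),
          mul_le_mul_of_nonneg_left hm (show (0:ℝ) ≤ 128 * m * x ^ 3 by positivity)]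
      have T4 : (0:ℝ) ≤ -(m ^ 2 * v ^ 3) := by
        have : v ^ 3 ≤ 0 := by nlinarith [sq_nonneg v]
        nlinarith
      linarith [h1, h2, T2, T3, T4,
        mul_nonneg (mul_nonneg hm0.le hm0.le) (show (0:ℝ) ≤ x ^ 3 by positivity),
        mul_nonneg hm0.le (show (0:ℝ) ≤ x ^ 3 by positivity)]
    exact le_of_mul_le_mul_left (by linarith [key]) (show (0:ℝ) < m * x ^ 3 by positivity)
  rw [Metric.tendsto_atTop]
  intro ε hε
  set δ := min (ε / 2) 1 with hδdef
  have hδ0 : 0 < δ := lt_min (by linarith) one_pos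
  have hδ1 : δ ≤ 1 := min_le_right _ _
  have hδε : δ < ε := lt_of_le_of_lt (min_le_left _ _) (by linarith)
  set rA := max r5 (m * (1000 * m + 2) / δ) with hrAdef
  have hrA5 : r5 ≤ rA := le_max_left _ _
  have hrAm : m * (1000 * m + 2) / δ ≤ rA := le_max_right _ _
  have hrAR : R ≤ rA := le_trans hr5R hrA5
  have claimA : ∃ b, rA ≤ b ∧ ∀ r, b ≤ r → r * (φ r - r / m) ≤ -1 + δ := by
    have reach : ∃ b, rA ≤ b ∧ b * (φ b - b / m) ≤ -1 + δ := by
      by_contra h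
      push_neg at h
      have hbound : ∀ x ∈ Ici rA, (φ x - x / m) + x * (Fd m φ x - 1 / m) ≤ -1 :=
        fun x hx => estA δ hδ0 hδ1 x (le_trans hrA5 hx) (le_trans hrAm hx)
          (le_of_lt (h x hx))
      have decay := linear_decay (hdu hφ hrAR) hbound
      have h10 : rA ≤ rA + 10 := by linarith
      have hend := decay (rA + 10) h10
      have h0 := (hr5 rA hrA5).2
      have hlast := h (rA + 10) h10
      linarith
    obtain ⟨b, hbrA, hb⟩ := reach
    refine ⟨b, hbrA, ?_⟩
    intro r hr
    refine barrier_le (B := fun _ => -1 + δ) (B' := fun _ => 0)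
      (hdu hφ (le_trans hrAR hbrA)) (fun x _ => hasDerivWithinAt_const x _ _)
      hb ?_ r hr
    intro x hx hcontact
    have hcontact' : x * (φ x - x / m) = -1 + δ := hcontact
    have := estA δ hδ0 hδ1 x (le_trans hrA5 (le_trans hbrA hx))
      (le_trans hrAm (le_trans hbrA hx)) (le_of_eq hcontact'.symm)
    linarith
  have claimB : ∃ b, rA ≤ b ∧ ∀ r, b ≤ r → -1 - δ ≤ r * (φ r - r / m) := by
    have reach : ∃ b, rA ≤ b ∧ -1 - δ ≤ b * (φ b - b / m) := by
      by_contra h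
      push_neg at h
      have hbound : ∀ x ∈ Ici rA, (1:ℝ) ≤ (φ x - x / m) + x * (Fd m φ x - 1 / m) :=
        fun x hx => estB δ hδ0 hδ1 x (le_trans hrA5 hx) (le_trans hrAm hx)
          (le_of_lt (h x hx))
      have grow := linear_growth (hdu hφ hrAR) hbound
      have h10 : rA ≤ rA + 10 := by linarith
      have hend := grow (rA + 10) h10
      have h0 := (hr5 rA hrA5).1
      have hlast := h (rA + 10) h10
      linarith
    obtain ⟨b, hbrA, hb⟩ := reach
    refine ⟨b, hbrA, ?_⟩
    intro r hr
    refine barrier_ge (B := fun _ => -1 - δ) (B' := fun _ => 0)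
      (hdu hφ (le_trans hrAR hbrA)) (fun x _ => hasDerivWithinAt_const x _ _)
      hb ?_ r hr
    intro x hx hcontact
    have hcontact' : x * (φ x - x / m) = -1 - δ := hcontact
    have := estB δ hδ0 hδ1 x (le_trans hrA5 (le_trans hbrA hx))
      (le_trans hrAm (le_trans hbrA hx)) (le_of_eq hcontact')
    linarith
  obtain ⟨bA, hbA, hA⟩ := claimA
  obtain ⟨bB, hbB, hB2⟩ := claimB
  refine ⟨max bA bB, ?_⟩
  intro r hr
  have h1 := hA r (le_trans (le_max_left _ _) hr)
  have h2 := hB2 r (le_trans (le_max_right _ _) hr)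
  rw [Real.dist_eq]
  have habs : |r * (φ r - r / m) - (-1)| ≤ δ :=
    abs_le.2 ⟨by linarith, by linarith⟩
  linarith

end Main

theorem translator_ode_second_order {n : ℕ} (hn : 2 ≤ n) (R : ℝ) (hR : 0 < R)
    (φ : ℝ → ℝ)
    (hφ : ∀ r ∈ Ici R,
      HasDerivWithinAt φ ((1 + φ r ^ 2) * (1 - ((n : ℝ) - 1) * φ r / r)) (Ici R) r) :
    Tendsto (fun r => r * (φ r - r / ((n : ℝ) - 1))) atTop (nhds (-1)) := by
  have hn2 : (2:ℝ) ≤ (n : ℝ) := by exact_mod_cast hn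
  have hm : 1 ≤ (n : ℝ) - 1 := by linarith
  exact stage4 hm hR (fun x hx => hφ x hx)
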